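/- For every Δ ∈ ℕ, the cost function for shortest Δ-restless temporal walks, which maps a temporal walk W to its number of transitions if the time labels of any two consecutive transitions of W differ by at most Δ, and to ∞ otherwise, is prefix-compatible (that is, both prefix-optimal and prefix-exchangeable). -/

import Mathlib

open scoped Classical

/-- A time arc `(u, v, t)`: a transition from vertex `u` to vertex `v` at time step `t`. -/
abbrev TArc (V : Type*) := V × V × ℕ

/-- A directed temporal graph `𝒢 = (V, ℰ, T)`: the time arcs connect distinct vertices
and carry time labels in `[T] = {1, …, T}`. -/
structure TemporalGraph (V : Type*) where
  lifetime : ℕ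
  arcs : Set (TArc V)
  arcs_valid : ∀ e ∈ arcs, e.1 ≠ e.2.1 ∧ 1 ≤ e.2.2 ∧ e.2.2 ≤ lifetime

namespace TemporalGraph

variable {V : Type*}

/-- `L` is a temporal walk of `G`: a nonempty sequence of time arcs of `G` in which the
endpoint of each arc is the starting point of the next one, with non-decreasing labels. -/
def IsTWalk (G : TemporalGraph V) (L : List (TArc V)) : Prop :=
  L ≠ [] ∧ (∀ e ∈ L, e ∈ G.arcs) ∧ L.Chain' fun e f => e.2.1 = f.1 ∧ e.2.2 ≤ f.2.2

/-- The walk `L` starts at vertex `s`. -/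
def StartsAt (s : V) (L : List (TArc V)) : Prop := ∃ e ∈ L.head?, e.1 = s

/-- The walk `L` ends at vertex `z`. -/
def EndsAt (z : V) (L : List (TArc V)) : Prop := ∃ e ∈ L.getLast?, e.2.1 = z

/-- The walk `L` ends at the vertex appearance `(v, t)`. -/
def EndsAtApp (v : V) (t : ℕ) (L : List (TArc V)) : Prop :=
  ∃ e ∈ L.getLast?, e.2.1 = v ∧ e.2.2 = t

/-- `L` is an `s`-`z`-walk of `G`. -/
def IsWalkFromTo (G : TemporalGraph V) (s z : V) (L : List (TArc V)) : Prop :=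
  G.IsTWalk L ∧ StartsAt s L ∧ EndsAt z L

/-- `L` is an `s`-`(v,t)`-walk of `G`. -/
def IsWalkFromToApp (G : TemporalGraph V) (s v : V) (t : ℕ) (L : List (TArc V)) : Prop :=
  G.IsTWalk L ∧ StartsAt s L ∧ EndsAtApp v t L

/-- The list of vertices visited by a walk (its starting point followed by the
endpoints of all its transitions). -/
def walkVerts (L : List (TArc V)) : List V :=
  (L.head?.map Prod.fst).toList ++ L.map fun e => e.2.1

/-- A temporal path is a temporal walk that visits each vertex at most once. -/
def IsTPath (G : TemporalGraph V) (L : List (TArc V)) : Prop :=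
  G.IsTWalk L ∧ (walkVerts L).Nodup

/-- The walk `L` goes through vertex `v`. -/
def VisitsVertex (v : V) (L : List (TArc V)) : Prop := v ∈ walkVerts L

/-- The walk `L` contains a transition into the vertex appearance `(v, t)`. -/
def ContainsApp (v : V) (t : ℕ) (L : List (TArc V)) : Prop :=
  ∃ e ∈ L, e.2.1 = v ∧ e.2.2 = t

/-- The walk `L`, regarded as a walk starting at source `s`, goes through the vertex
appearance `(v, t)`; by convention the source is visited at the appearance `(s, 0)` only. -/
def VisitsApp (s v : V) (t : ℕ) (L : List (TArc V)) : Prop :=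
  (v = s ∧ t = 0) ∨ (v ≠ s ∧ ContainsApp v t L)

/-- A cost function maps temporal walks (arc sequences) to `ℝ ∪ {∞}`. -/
abbrev CostFn (V : Type*) := List (TArc V) → WithTop ℝ

/-- `c*_s(v, t)`: the minimum value of `c` over all `s`-`(v,t)`-walks; it is `∞` if the
minimum is not defined (not attained) or if there is no such walk. -/
noncomputable def cStar (G : TemporalGraph V) (c : CostFn V) (s v : V) (t : ℕ) : WithTop ℝ :=
  if h : ∃ L, G.IsWalkFromToApp s v t L ∧ ∀ L', G.IsWalkFromToApp s v t L' → c L ≤ c L' then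
    c h.choose
  else ⊤

/-- `c*_s(v) = min_{t ∈ [T]} c*_s(v, t)`. -/
noncomputable def cStarV (G : TemporalGraph V) (c : CostFn V) (s v : V) : WithTop ℝ :=
  (Finset.Icc 1 G.lifetime).inf fun t => G.cStar c s v t

/-- `L` is a `c`-optimal `s`-`(v,t)`-walk: `c L = c*_s(v, t) < ∞`. -/
def IsOptWalkToApp (G : TemporalGraph V) (c : CostFn V) (s v : V) (t : ℕ)
    (L : List (TArc V)) : Prop :=
  G.IsWalkFromToApp s v t L ∧ c L = G.cStar c s v t ∧ c L ≠ ⊤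

/-- `L` is a `c`-optimal `s`-`v`-walk: `c L = c*_s(v) < ∞`. -/
def IsOptWalkTo (G : TemporalGraph V) (c : CostFn V) (s v : V) (L : List (TArc V)) : Prop :=
  G.IsWalkFromTo s v L ∧ c L = G.cStarV c s v ∧ c L ≠ ⊤

/-- The induced set `𝒲^(c)` of optimal temporal walks of `c`. -/
def OptWalks (G : TemporalGraph V) (c : CostFn V) : Set (List (TArc V)) :=
  {L | ∃ s z, G.IsOptWalkTo c s z L}

/-- `c` is prefix-optimal: every prefix of an optimal temporal walk from `s`, ending at a
vertex appearance `(v, t)` of the walk, has cost `c*_s(v, t)`. -/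
def PrefixOptimal (G : TemporalGraph V) (c : CostFn V) : Prop :=
  ∀ L ∈ G.OptWalks c, ∀ s, StartsAt s L →
    ∀ (i : ℕ) (e : TArc V), L[i]? = some e →
      c (L.take (i + 1)) = G.cStar c s e.2.1 e.2.2

/-- `c` is prefix-exchangeable: if an optimal temporal walk from `s` goes through a vertex
appearance `(v, t)`, then replacing its prefix up to `(v, t)` by any `s`-`(v,t)`-walk of
cost `c*_s(v, t)` again yields an optimal temporal walk. -/
def PrefixExchangeable (G : TemporalGraph V) (c : CostFn V) : Prop :=
  ∀ L ∈ G.OptWalks c, ∀ s, StartsAt s L →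
    ∀ (i : ℕ) (e : TArc V), L[i]? = some e →
      ∀ L', G.IsWalkFromToApp s e.2.1 e.2.2 L' → c L' = G.cStar c s e.2.1 e.2.2 →
        L' ++ L.drop (i + 1) ∈ G.OptWalks c

/-- `c` is prefix-compatible if it is both prefix-optimal and prefix-exchangeable. -/
def PrefixCompatible (G : TemporalGraph V) (c : CostFn V) : Prop :=
  G.PrefixOptimal c ∧ G.PrefixExchangeable c

/-- `c` is finite if `𝒲^(c)` has finite cardinality. -/
def FiniteCost (G : TemporalGraph V) (c : CostFn V) : Prop := (G.OptWalks c).Finite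

/-- The direct predecessor relation of source `s` with respect to the walk set `Wset`:
`IsDirPred Wset s p q` holds iff `p ∈ Pre_s(q)`, i.e. iff some walk in `Wset` starting
at `s` visits the vertex appearance `p` directly before the vertex appearance `q`, or
`p = (s, 0)` and some walk in `Wset` starting at `s` begins with a transition into `q`.
This relation is exactly the arc relation of the predecessor graph `G̃_s`. -/
def IsDirPred (Wset : Set (List (TArc V))) (s : V) (p q : V × ℕ) : Prop :=
  ∃ L ∈ Wset, StartsAt s L ∧
    ((∃ (i : ℕ) (e f : TArc V), L[i]? = some e ∧ L[i + 1]? = some f ∧ e.2 = p ∧ f.2 = q) ∨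
      (p = (s, 0) ∧ ∃ f ∈ L.head?, f.2 = q))

/-- A directed path from `p` to `q` in the static digraph given by the arc relation `R`. -/
def IsRelPath {α : Type*} (R : α → α → Prop) (p q : α) (P : List α) : Prop :=
  P.Chain' R ∧ P.head? = some p ∧ P.getLast? = some q ∧ P.Nodup

/-- `σ_{sz}`: the number of `s`-`z`-walks in `𝒲`. -/
noncomputable def sigma (G : TemporalGraph V) (𝒲 : Set (List (TArc V))) (s z : V) : ℕ :=
  {L ∈ 𝒲 | G.IsWalkFromTo s z L}.ncard

/-- `σ_{sz}(v)`: the number of `s`-`z`-walks in `𝒲` that go through the vertex `v`. -/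
noncomputable def sigmaV (G : TemporalGraph V) (𝒲 : Set (List (TArc V))) (s z v : V) : ℕ :=
  {L ∈ 𝒲 | G.IsWalkFromTo s z L ∧ VisitsVertex v L}.ncard

/-- `σ_{sz}(v, t)`: the number of `s`-`z`-walks in `𝒲` that go through the vertex
appearance `(v, t)`. -/
noncomputable def sigmaApp (G : TemporalGraph V) (𝒲 : Set (List (TArc V))) (s z v : V)
    (t : ℕ) : ℕ :=
  {L ∈ 𝒲 | G.IsWalkFromTo s z L ∧ VisitsApp s v t L}.ncard

/-- `σ_{s(v,t)}`: the number of `c`-optimal `s`-`(v,t)`-walks. -/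
noncomputable def sigmaOptApp (G : TemporalGraph V) (c : CostFn V) (s v : V) (t : ℕ) : ℕ :=
  {L | G.IsOptWalkToApp c s v t L}.ncard

/-- The pair dependency `δ_{𝒲,sz}(v)`. -/
noncomputable def pairDep (G : TemporalGraph V) (𝒲 : Set (List (TArc V))) (s z v : V) : ℝ :=
  if 0 < G.sigma 𝒲 s z then (G.sigmaV 𝒲 s z v : ℝ) / (G.sigma 𝒲 s z : ℝ) else 0

/-- The temporal pair dependency `δ_{𝒲,sz}(v, t)`. -/
noncomputable def pairDepApp (G : TemporalGraph V) (𝒲 : Set (List (TArc V))) (s z v : V)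
    (t : ℕ) : ℝ :=
  if 0 < G.sigma 𝒲 s z then (G.sigmaApp 𝒲 s z v t : ℝ) / (G.sigma 𝒲 s z : ℝ) else 0

/-- The cumulative dependency `δ_{𝒲,s}(v)`. -/
noncomputable def cumDep [Fintype V] (G : TemporalGraph V) (𝒲 : Set (List (TArc V)))
    (s v : V) : ℝ :=
  ∑ z : V, G.pairDep 𝒲 s z v

/-- The temporal cumulative dependency `δ_{𝒲,s}(v, t)`. -/
noncomputable def cumDepApp [Fintype V] (G : TemporalGraph V) (𝒲 : Set (List (TArc V)))
    (s v : V) (t : ℕ) : ℝ :=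
  ∑ z : V, G.pairDepApp 𝒲 s z v t

/-- The temporal betweenness centrality `B_𝒲(v) = Σ_{s ≠ v ≠ z} δ_{𝒲,sz}(v)`. -/
noncomputable def btw [Fintype V] (G : TemporalGraph V) (𝒲 : Set (List (TArc V)))
    (v : V) : ℝ :=
  ∑ s : V, ∑ z : V, if s ≠ v ∧ z ≠ v then G.pairDep 𝒲 s z v else 0

/-- The total temporal betweenness centrality `B*_𝒲(v) = Σ_{s, z ∈ V} δ_{𝒲,sz}(v)`. -/
noncomputable def totBtw [Fintype V] (G : TemporalGraph V) (𝒲 : Set (List (TArc V)))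
    (v : V) : ℝ :=
  ∑ s : V, ∑ z : V, G.pairDep 𝒲 s z v

/-- The edge dependency `δ_{𝒲,sz}(v, t, (v, w, t'))`: the fraction of `s`-`z`-walks in `𝒲`
that go through the vertex appearance `(v, t)` and use the time arc `(v, w, t')`. -/
noncomputable def edgeDep (G : TemporalGraph V) (𝒲 : Set (List (TArc V))) (s z v : V)
    (t : ℕ) (w : V) (t' : ℕ) : ℝ :=
  if 0 < G.sigma 𝒲 s z then
    ({L ∈ 𝒲 | G.IsWalkFromTo s z L ∧ VisitsApp s v t L ∧ (v, w, t') ∈ L}.ncard : ℝ) /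
      (G.sigma 𝒲 s z : ℝ)
  else 0

/-- The cost function for shortest `Δ`-restless temporal walks: it maps a temporal walk
`W` to its number of transitions if the time labels of any two consecutive transitions of
`W` differ by at most `Δ`, and to `∞` otherwise. -/
noncomputable def restlessCost (Δ : ℕ) : CostFn V := fun L =>
  if L.Chain' (fun e f => f.2.2 ≤ e.2.2 + Δ) then ((L.length : ℝ) : WithTop ℝ) else ⊤

section Aux

variable {Δ : ℕ} {G : TemporalGraph V} {s v z : V} {t : ℕ} {L L' : List (TArc V)}

private lemma rc_of_chain (h : L.Chain' fun e f => f.2.2 ≤ e.2.2 + Δ) :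
    restlessCost Δ L = ((L.length : ℝ) : WithTop ℝ) := if_pos h

private lemma rc_chain_of_ne_top (h : restlessCost Δ L ≠ ⊤) :
    L.Chain' fun e f => f.2.2 ≤ e.2.2 + Δ := by
  by_contra hc
  exact h (if_neg hc)

private lemma exists_min (G : TemporalGraph V) (Δ : ℕ) (s v : V) (t : ℕ)
    (h : ∃ L, G.IsWalkFromToApp s v t L) :
    ∃ M, G.IsWalkFromToApp s v t M ∧
      ∀ L', G.IsWalkFromToApp s v t L' → restlessCost Δ M ≤ restlessCost Δ L' := by
  by_cases hr : ∃ n : ℕ, ∃ L, G.IsWalkFromToApp s v t L ∧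
      (L.Chain' fun e f => f.2.2 ≤ e.2.2 + Δ) ∧ L.length = n
  · obtain ⟨L, hL, hLc, hlen⟩ := Nat.find_spec hr
    refine ⟨L, hL, fun L' hL' => ?_⟩
    rw [rc_of_chain hLc]
    by_cases h' : L'.Chain' fun e f => f.2.2 ≤ e.2.2 + Δ
    · rw [rc_of_chain h']
      have h2 : Nat.find hr ≤ L'.length := Nat.find_min' hr ⟨L', hL', h', rfl⟩
      exact_mod_cast (by exact_mod_cast hlen ▸ h2 : (L.length : ℝ) ≤ (L'.length : ℝ))
    · rw [show restlessCost Δ L' = ⊤ from if_neg h']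
      exact le_top
  · obtain ⟨L, hL⟩ := h
    refine ⟨L, hL, fun L' hL' => ?_⟩
    rw [show restlessCost Δ L' = ⊤ from if_neg fun hc => hr ⟨L'.length, L', hL', hc, rfl⟩]
    exact le_top

private lemma cStar_le_rc (hL : G.IsWalkFromToApp s v t L) :
    G.cStar (restlessCost Δ) s v t ≤ restlessCost Δ L := by
  have h : ∃ M, G.IsWalkFromToApp s v t M ∧
      ∀ L', G.IsWalkFromToApp s v t L' → restlessCost Δ M ≤ restlessCost Δ L' :=
    exists_min G Δ s v t ⟨L, hL⟩
  rw [cStar, dif_pos h]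
  exact h.choose_spec.2 L hL

private lemma cStar_eq_rc (hL : G.IsWalkFromToApp s v t L)
    (hle : restlessCost Δ L ≤ G.cStar (restlessCost Δ) s v t) :
    G.cStar (restlessCost Δ) s v t = restlessCost Δ L :=
  le_antisymm (cStar_le_rc hL) hle

private lemma cStarV_le_rc (hL : G.IsWalkFromTo s z L) :
    G.cStarV (restlessCost Δ) s z ≤ restlessCost Δ L := by
  obtain ⟨a, ha, haz⟩ := hL.2.2
  obtain ⟨hne, hm⟩ := List.mem_getLast?_eq_getLast ha
  have haL : a ∈ L := hm ▸ List.getLast_mem hne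
  have hv := G.arcs_valid a (hL.1.2.1 a haL)
  have happ : G.IsWalkFromToApp s z a.2.2 L := ⟨hL.1, hL.2.1, ⟨a, ha, haz, rfl⟩⟩
  calc G.cStarV (restlessCost Δ) s z ≤ G.cStar (restlessCost Δ) s z a.2.2 :=
        Finset.inf_le (Finset.mem_Icc.2 ⟨hv.2.1, hv.2.2⟩)
    _ ≤ restlessCost Δ L := cStar_le_rc happ

private lemma startsAt_unique {s s' : V} (h : StartsAt s L) (h' : StartsAt s' L) : s = s' := by
  obtain ⟨a, ha, rfl⟩ := h
  obtain ⟨b, hb, rfl⟩ := h'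
  simp only [Option.mem_def] at ha hb
  rw [ha] at hb
  exact congrArg Prod.fst (Option.some_inj.1 hb)

/-- Splicing a walk to `(e.2.1, e.2.2)` with the tail of `L` after position `i`. -/
private lemma splice {i : ℕ} {e : TArc V} (hL : G.IsTWalk L)
    (hLr : L.Chain' fun e f => f.2.2 ≤ e.2.2 + Δ) (hz : EndsAt z L)
    (he : L[i]? = some e) (hL' : G.IsWalkFromToApp s e.2.1 e.2.2 L')
    (hL'r : L'.Chain' fun e f => f.2.2 ≤ e.2.2 + Δ) :
    G.IsWalkFromTo s z (L' ++ L.drop (i + 1)) ∧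
      ((L' ++ L.drop (i + 1)).Chain' fun e f => f.2.2 ≤ e.2.2 + Δ) ∧
      (L' ++ L.drop (i + 1)).length = L'.length + (L.length - (i + 1)) := by
  obtain ⟨hi, hieq⟩ := List.getElem?_eq_some_iff.1 he
  have hL'ne : L' ≠ [] := hL'.1.1
  obtain ⟨d, hd, hdv, hdt⟩ := hL'.2.2
  -- junction facts
  have hjunc : ∀ y, (L.drop (i + 1)).head? = some y →
      (d.2.1 = y.1 ∧ d.2.2 ≤ y.2.2) ∧ y.2.2 ≤ d.2.2 + Δ := by
    intro y hy
    rw [List.head?_drop] at hy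
    obtain ⟨hi1, hyeq⟩ := List.getElem?_eq_some_iff.1 hy
    have h1 := List.isChain_iff_getElem.1 hL.2.2 i (by omega)
    have h2 := List.isChain_iff_getElem.1 hLr i (by omega)
    simp only [List.get_eq_getElem, hieq, hyeq] at h1 h2
    exact ⟨⟨hdv.symm ▸ h1.1, hdt.symm ▸ h1.2⟩, hdt.symm ▸ h2⟩
  refine ⟨⟨⟨by simp [hL'ne], ?_, ?_⟩, ?_, ?_⟩, ?_, ?_⟩
  · intro f hf
    rcases List.mem_append.1 hf with hf | hf
    · exact hL'.1.2.1 f hf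
    · exact hL.2.1 f (List.drop_subset _ _ hf)
  · refine List.IsChain.append hL'.1.2.2 (hL.2.2.drop _) ?_
    intro x hx y hy
    rw [hd] at hx
    obtain rfl : d = x := Option.some_inj.1 hx
    exact (hjunc y hy).1
  · obtain ⟨a, ha, has⟩ := hL'.2.1
    exact ⟨a, by rw [List.head?_append_of_ne_nil _ hL'ne]; exact ha, has⟩
  · by_cases hdr : L.drop (i + 1) = []
    · have hlen : L.length ≤ i + 1 := by
        have := List.length_drop (i := i + 1) (l := L)
        rw [hdr] at this
        simp at this
        omega
      have hieq' : i = L.length - 1 := by omega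
      obtain ⟨a, ha, haz⟩ := hz
      have : L[i]? = L.getLast? := by
        rw [List.getLast?_eq_getElem?, hieq']
      rw [this, ha] at he
      obtain rfl : a = e := Option.some_inj.1 he
      refine ⟨d, ?_, haz ▸ hdv⟩
      rw [hdr, List.append_nil]
      exact hd
    · refine ⟨_, ?_, (hz.choose_spec).2⟩
      rw [List.getLast?_append_of_ne_nil _ hdr, List.getLast?_drop,
        if_neg (by simp only [← List.length_pos_iff, List.length_drop] at hdr; omega)]
      exact hz.choose_spec.1
  · refine List.IsChain.append hL'r (hLr.drop _) ?_
    intro x hx y hy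
    rw [hd] at hx
    obtain rfl : d = x := Option.some_inj.1 hx
    exact (hjunc y hy).2
  · rw [List.length_append, List.length_drop]

private lemma cStar_eq_of_min (hL : G.IsWalkFromToApp s v t L)
    (hmin : ∀ L', G.IsWalkFromToApp s v t L' → restlessCost Δ L ≤ restlessCost Δ L') :
    G.cStar (restlessCost Δ) s v t = restlessCost Δ L := by
  have h : ∃ M, G.IsWalkFromToApp s v t M ∧
      ∀ L', G.IsWalkFromToApp s v t L' → restlessCost Δ M ≤ restlessCost Δ L' := ⟨L, hL, hmin⟩
  rw [cStar, dif_pos h]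
  exact le_antisymm (h.choose_spec.2 L hL) (hmin _ h.choose_spec.1)

private lemma key_lemma (G : TemporalGraph V) (Δ : ℕ) :
    ∀ L ∈ G.OptWalks (restlessCost Δ), ∀ s, StartsAt s L →
      ∀ (i : ℕ) (e : TArc V), L[i]? = some e →
        ∃ z, G.IsOptWalkTo (restlessCost Δ) s z L ∧
          G.IsWalkFromToApp s e.2.1 e.2.2 (L.take (i + 1)) ∧
          restlessCost Δ (L.take (i + 1)) = (((i + 1 : ℕ) : ℝ) : WithTop ℝ) ∧
          G.cStar (restlessCost Δ) s e.2.1 e.2.2 = restlessCost Δ (L.take (i + 1)) := by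
  intro L hL s hs i e he
  obtain ⟨s', z, hwalk, hcost, hfin⟩ := hL
  obtain rfl : s = s' := startsAt_unique hs hwalk.2.1
  have hLr := rc_chain_of_ne_top hfin
  have hcL : restlessCost Δ L = ((L.length : ℝ) : WithTop ℝ) := rc_of_chain hLr
  obtain ⟨hi, hieq⟩ := List.getElem?_eq_some_iff.1 he
  have hPlen : (L.take (i + 1)).length = i + 1 := by
    rw [List.length_take]; omega
  have hP : G.IsWalkFromToApp s e.2.1 e.2.2 (L.take (i + 1)) := by
    refine ⟨⟨?_, fun f hf => hwalk.1.2.1 f (List.take_subset _ _ hf), hwalk.1.2.2.take _⟩,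
      ?_, ?_⟩
    · rw [← List.length_pos_iff, hPlen]; omega
    · obtain ⟨a, ha, has⟩ := hwalk.2.1
      refine ⟨a, ?_, has⟩
      rw [List.head?_take, if_neg (by omega)]
      exact ha
    · refine ⟨e, ?_, rfl, rfl⟩
      rw [List.getLast?_take, if_neg (by omega)]
      simp [he]
  have hPr : (L.take (i + 1)).Chain' fun e f => f.2.2 ≤ e.2.2 + Δ := hLr.take _
  have hPc : restlessCost Δ (L.take (i + 1)) = (((i + 1 : ℕ) : ℝ) : WithTop ℝ) := by
    rw [rc_of_chain hPr, hPlen]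
  refine ⟨z, ⟨hwalk, hcost, hfin⟩, hP, hPc, cStar_eq_rc hP ?_⟩
  obtain ⟨M, hM, hMmin⟩ := exists_min G Δ s e.2.1 e.2.2 ⟨_, hP⟩
  have hcsM : G.cStar (restlessCost Δ) s e.2.1 e.2.2 = restlessCost Δ M :=
    cStar_eq_of_min hM hMmin
  have hMne : restlessCost Δ M ≠ ⊤ := by
    intro htop
    have h' := hMmin _ hP
    rw [htop, top_le_iff, hPc] at h'
    exact WithTop.coe_ne_top h'
  have hMr := rc_chain_of_ne_top hMne
  obtain ⟨hMwt, hMr2, hMlen⟩ := splice hwalk.1 hLr hwalk.2.2 he hM hMr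
  have h1 : G.cStarV (restlessCost Δ) s z ≤ restlessCost Δ (M ++ L.drop (i + 1)) :=
    cStarV_le_rc hMwt
  rw [rc_of_chain hMr2, hMlen, ← hcost, hcL] at h1
  have h2 : L.length ≤ M.length + (L.length - (i + 1)) := by exact_mod_cast h1
  have h3 : i + 1 ≤ M.length := by omega
  rw [hcsM, hPc, rc_of_chain hMr]
  exact_mod_cast h3

end Aux

/-- For every `Δ ∈ ℕ`, the cost function for shortest `Δ`-restless
temporal walks is prefix-compatible (both prefix-optimal and prefix-exchangeable). -/
theorem restlessCost_prefixCompatible {V : Type*} [Fintype V] (G : TemporalGraph V)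
    (Δ : ℕ) :
    G.PrefixCompatible (restlessCost Δ) := by
  have hpo : G.PrefixOptimal (restlessCost Δ) := by
    intro L hL s hs i e he
    obtain ⟨z, _, _, _, hcs⟩ := key_lemma G Δ L hL s hs i e he
    exact hcs.symm
  refine ⟨hpo, ?_⟩
  intro L hL s hs i e he L' hL' hcL'
  obtain ⟨z, hopt, hP, hPc, hcs⟩ := key_lemma G Δ L hL s hs i e he
  obtain ⟨hwalk, hcost, hfin⟩ := hopt
  have hLr := rc_chain_of_ne_top hfin
  rw [hcs, hPc] at hcL'
  have hL'ne : restlessCost Δ L' ≠ ⊤ := by rw [hcL']; exact WithTop.coe_ne_top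
  have hL'r := rc_chain_of_ne_top hL'ne
  have hL'len : L'.length = i + 1 := by
    rw [rc_of_chain hL'r] at hcL'
    exact_mod_cast hcL'
  obtain ⟨hw2, hr2, hlen2⟩ := splice hwalk.1 hLr hwalk.2.2 he hL' hL'r
  obtain ⟨hi, _⟩ := List.getElem?_eq_some_iff.1 he
  refine ⟨s, z, hw2, ?_, ?_⟩
  · rw [rc_of_chain hr2, hlen2, hL'len,
      show i + 1 + (L.length - (i + 1)) = L.length from by omega,
      ← rc_of_chain hLr, hcost]
  · rw [rc_of_chain hr2]; exact WithTop.coe_ne_top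


end TemporalGraph
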